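/- Let L be a finite-dimensional solvable Lie algebra over a field of characteristic p > 0 such that the derived algebra L² is nilpotent of class less than p, and let M, K be maximal subalgebras of L. Then M and K are conjugate in L if and only if they have the same core: M_L = K_L. -/

import Mathlib

open LieAlgebra

/-- The (truncated) exponential of the adjoint of `x`, `Σ_{r<p} (1/r!)(ad x)^r`. -/
noncomputable def expAdP (F : Type*) [Field F] (L : Type*) [LieRing L] [LieAlgebra F L]
    (p : ℕ) (x : L) : Module.End F L :=
  ∑ r ∈ Finset.range p, ((r.factorial : F)⁻¹) • (LieAlgebra.ad F L x ^ r)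

/-- The core of a subalgebra: the largest ideal of `L` contained in it. -/
noncomputable def lieCore (F : Type*) [Field F] (L : Type*) [LieRing L] [LieAlgebra F L]
    (M : LieSubalgebra F L) : LieIdeal F L :=
  sSup {I : LieIdeal F L | (I : Set L) ⊆ (M : Set L)}

section ESeries
variable (F : Type*) [Field F] (L : Type*) [LieRing L] [LieAlgebra F L]

/-- external lower central series of the derived ideal acting on `L`, starting at `⊤`. -/
def bseS : ℕ → LieIdeal F L
  | 0 => ⊤
  | (k+1) => ⁅(⁅(⊤ : LieIdeal F L), (⊤ : LieIdeal F L)⁆ : LieIdeal F L), bseS k⁆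

variable {F L}

lemma bseS_succ_le_map (k : ℕ) :
    (bseS F L (k+1)).toSubmodule ≤ Submodule.map
      ((⁅(⊤ : LieIdeal F L), (⊤ : LieIdeal F L)⁆ : LieIdeal F L).incl.toLinearMap)
      (LieModule.lowerCentralSeries F
        (⁅(⊤ : LieIdeal F L), (⊤ : LieIdeal F L)⁆ : LieIdeal F L)
        (⁅(⊤ : LieIdeal F L), (⊤ : LieIdeal F L)⁆ : LieIdeal F L) k).toSubmodule := by
  induction k with
  | zero =>
    show (⁅_, bseS F L 0⁆ : LieIdeal F L).toSubmodule ≤ _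
    rw [LieSubmodule.lieIdeal_oper_eq_linear_span]
    refine Submodule.span_le.2 ?_
    rintro _ ⟨x, n, rfl⟩
    exact ⟨⟨⁅(x : L), (n : L)⁆, lie_mem_left F L _ (x : L) (n : L) x.2⟩, by simp, rfl⟩
  | succ k ih =>
    show (⁅_, bseS F L (k+1)⁆ : LieIdeal F L).toSubmodule ≤ _
    rw [LieSubmodule.lieIdeal_oper_eq_linear_span]
    refine Submodule.span_le.2 ?_
    rintro _ ⟨x, n, rfl⟩
    obtain ⟨z, hz, hzeq⟩ := ih n.2
    refine ⟨⁅x, z⁆, ?_, ?_⟩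
    · rw [LieModule.lowerCentralSeries_succ]
      exact LieSubmodule.lie_mem_lie (LieSubmodule.mem_top _) hz
    · show (⁅(x : L), (z : L)⁆ : L) = _
      have : (z : L) = (n : L) := hzeq
      rw [this]

lemma bseS_eq_bot (p : ℕ) (hp : 0 < p)
    (hclass : LieModule.lowerCentralSeries F
        (⁅(⊤ : LieIdeal F L), (⊤ : LieIdeal F L)⁆ : LieIdeal F L)
        (⁅(⊤ : LieIdeal F L), (⊤ : LieIdeal F L)⁆ : LieIdeal F L) (p - 1) = ⊥) :
    bseS F L p = ⊥ := by
  obtain ⟨q, rfl⟩ := Nat.exists_eq_add_of_lt hp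
  simp only [Nat.zero_add] at *
  have h := bseS_succ_le_map (F := F) (L := L) q
  rw [Nat.add_sub_cancel] at hclass
  rw [hclass] at h
  rw [eq_bot_iff]
  intro y hy
  have := h hy
  simp only [LieSubmodule.bot_toSubmodule, Submodule.map_bot, Submodule.mem_bot] at this
  simpa using this

lemma ad_mem_bseS {x : L}
    (hx : x ∈ (⁅(⊤ : LieIdeal F L), (⊤ : LieIdeal F L)⁆ : LieIdeal F L)) (k : ℕ) (y : L) :
    ((ad F L x) ^ k) y ∈ bseS F L k := by
  induction k with
  | zero => simp [bseS]
  | succ k ih =>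
    rw [pow_succ']
    exact LieSubmodule.lie_mem_lie hx ih

lemma ad_pow_eq_zero (p : ℕ) (hp : 0 < p)
    (hclass : LieModule.lowerCentralSeries F
        (⁅(⊤ : LieIdeal F L), (⊤ : LieIdeal F L)⁆ : LieIdeal F L)
        (⁅(⊤ : LieIdeal F L), (⊤ : LieIdeal F L)⁆ : LieIdeal F L) (p - 1) = ⊥)
    {x : L} (hx : x ∈ (⁅(⊤ : LieIdeal F L), (⊤ : LieIdeal F L)⁆ : LieIdeal F L)) :
    (ad F L x) ^ p = 0 := by
  ext y
  have := ad_mem_bseS hx p y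
  rw [bseS_eq_bot p hp hclass] at this
  simpa using this

lemma le_of_le_lie_sup (p : ℕ) (hp : 0 < p)
    (hclass : LieModule.lowerCentralSeries F
        (⁅(⊤ : LieIdeal F L), (⊤ : LieIdeal F L)⁆ : LieIdeal F L)
        (⁅(⊤ : LieIdeal F L), (⊤ : LieIdeal F L)⁆ : LieIdeal F L) (p - 1) = ⊥)
    (J C : LieIdeal F L)
    (h : J ≤ ⁅(⁅(⊤ : LieIdeal F L), (⊤ : LieIdeal F L)⁆ : LieIdeal F L), J⁆ ⊔ C) :
    J ≤ C := by
  have key : ∀ k, J ≤ bseS F L k ⊔ C := by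
    intro k
    induction k with
    | zero => exact le_trans le_top (by simp [bseS])
    | succ k ih =>
      refine le_trans h ?_
      refine le_trans ?_ (le_refl (bseS F L (k+1) ⊔ C))
      have h1 : (⁅(⁅(⊤ : LieIdeal F L), (⊤ : LieIdeal F L)⁆ : LieIdeal F L), J⁆ : LieIdeal F L)
          ≤ ⁅(⁅(⊤ : LieIdeal F L), (⊤ : LieIdeal F L)⁆ : LieIdeal F L), bseS F L k ⊔ C⁆ :=
        LieSubmodule.mono_lie (le_refl _) ih
      rw [LieSubmodule.lie_sup] at h1
      have h2 : (⁅(⁅(⊤ : LieIdeal F L), (⊤ : LieIdeal F L)⁆ : LieIdeal F L), C⁆ : LieIdeal F L)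
          ≤ C := LieSubmodule.lie_le_right _ _
      have h3 : (⁅(⁅(⊤ : LieIdeal F L), (⊤ : LieIdeal F L)⁆ : LieIdeal F L), J⁆ : LieIdeal F L) ⊔ C
          ≤ (bseS F L (k+1) ⊔ C) ⊔ C :=
        sup_le_sup_right (le_trans h1 (sup_le_sup_left h2 _)) C
      rwa [sup_assoc, sup_idem] at h3
  have := key p
  rwa [bseS_eq_bot p hp hclass, bot_sup_eq] at this

end ESeries

section ExpLemmas
variable {F : Type*} [Field F] {L : Type*} [LieRing L] [LieAlgebra F L]

/-- operators preserving an ideal -/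
def presv (J : LieIdeal F L) (f : Module.End F L) : Prop := ∀ z ∈ J, f z ∈ J

lemma presv_sum (J : LieIdeal F L) {ι : Type*} (s : Finset ι) (f : ι → Module.End F L)
    (h : ∀ i ∈ s, presv J (f i)) : presv J (∑ i ∈ s, f i) := by
  intro z hz
  rw [LinearMap.sum_apply]
  exact Submodule.sum_mem _ fun i hi => h i hi z hz

lemma presv_smul (J : LieIdeal F L) (c : F) (f : Module.End F L) (h : presv J f) :
    presv J (c • f) := fun z hz => by
  rw [LinearMap.smul_apply]; exact Submodule.smul_mem _ _ (h z hz)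

lemma presv_mul (J : LieIdeal F L) (f g : Module.End F L) (hf : presv J f) (hg : presv J g) :
    presv J (f * g) := fun z hz => hf _ (hg z hz)

lemma presv_one (J : LieIdeal F L) : presv J 1 := fun z hz => hz

lemma presv_pow (J : LieIdeal F L) (f : Module.End F L) (h : presv J f) (n : ℕ) :
    presv J (f ^ n) := by
  induction n with
  | zero => exact presv_one J
  | succ n ih => rw [pow_succ]; exact presv_mul J _ _ ih h

lemma presv_neg (J : LieIdeal F L) (f : Module.End F L) (h : presv J f) : presv J (-f) :=
  fun z hz => by rw [LinearMap.neg_apply]; exact Submodule.neg_mem _ (h z hz)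

lemma presv_sub (J : LieIdeal F L) (f g : Module.End F L) (hf : presv J f) (hg : presv J g) :
    presv J (f - g) := fun z hz => by
  rw [LinearMap.sub_apply]; exact Submodule.sub_mem _ (hf z hz) (hg z hz)

lemma presv_ad (J : LieIdeal F L) (x : L) : presv J (ad F L x) := fun z hz => J.lie_mem hz

lemma presv_expAdP (J : LieIdeal F L) (p : ℕ) (x : L) : presv J (expAdP F L p x) :=
  presv_sum J _ _ fun r _ => presv_smul J _ _ (presv_pow J _ (presv_ad J x) r)

lemma expAdP_eq_one_add (p : ℕ) (hp : 0 < p) (x : L) :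
    ∃ Q : Module.End F L, Commute (ad F L x) Q ∧
      expAdP F L p x = 1 + (ad F L x) * Q := by
  refine ⟨∑ r ∈ Finset.range (p-1), (((r+1).factorial : F)⁻¹) • (ad F L x ^ r), ?_, ?_⟩
  · exact Commute.sum_right _ _ _ fun r _ =>
      Commute.smul_right (Commute.pow_right rfl r) _
  · rw [Finset.mul_sum]
    unfold expAdP
    obtain ⟨q, rfl⟩ : ∃ q, p = q + 1 := ⟨p - 1, (Nat.succ_pred_eq_of_pos hp).symm⟩
    rw [Finset.sum_range_succ']
    simp only [Nat.factorial_zero, Nat.cast_one, inv_one, pow_zero, one_smul,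
      Nat.add_sub_cancel]
    rw [add_comm]
    congr 1
    refine Finset.sum_congr rfl fun r _ => ?_
    rw [mul_smul_comm, ← pow_succ']

lemma expAdP_nilpart_pow (p : ℕ) (hp : 0 < p) (x : L) (hx : (ad F L x)^p = 0) :
    (expAdP F L p x - 1) ^ p = 0 := by
  obtain ⟨Q, hQ, heq⟩ := expAdP_eq_one_add (F := F) (L := L) p hp x
  rw [heq, add_sub_cancel_left, hQ.mul_pow, hx, zero_mul]

lemma expAdP_has_inv (p : ℕ) (hp : 0 < p) (x : L) (hx : (ad F L x)^p = 0) :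
    ∃ h : Module.End F L, h * expAdP F L p x = 1 ∧ expAdP F L p x * h = 1 ∧
      ∀ J : LieIdeal F L, presv J h := by
  set N := expAdP F L p x - 1 with hN
  have hNp : (-N) ^ p = 0 := by
    rw [neg_pow, expAdP_nilpart_pow p hp x hx, mul_zero]
  refine ⟨∑ i ∈ Finset.range p, (-N) ^ i, ?_, ?_, ?_⟩
  · have := geom_sum_mul (-N) p
    rw [hNp] at this
    have h2 : -N - 1 = -(expAdP F L p x) := by rw [hN]; abel
    rw [h2, mul_neg, zero_sub] at this
    exact neg_injective this
  · have := mul_geom_sum (-N) p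
    rw [hNp] at this
    have h2 : -N - 1 = -(expAdP F L p x) := by rw [hN]; abel
    rw [h2, neg_mul, zero_sub] at this
    exact neg_injective this
  · intro J
    refine presv_sum J _ _ fun i _ => presv_pow J _ ?_ i
    exact presv_neg J _ (presv_sub J _ _ (presv_expAdP J p x) (presv_one J))

end ExpLemmas

section CoreLemmas
variable {F : Type*} [Field F] {L : Type*} [LieRing L] [LieAlgebra F L]

lemma lieCore_le (M : LieSubalgebra F L) :
    (lieCore F L M).toSubmodule ≤ M.toSubmodule := by
  unfold lieCore
  rw [LieSubmodule.sSup_toSubmodule]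
  refine sSup_le ?_
  rintro _ ⟨J, hJ, rfl⟩
  intro z hz
  exact hJ hz

lemma lieCore_subset (M : LieSubalgebra F L) : ((lieCore F L M : LieIdeal F L) : Set L) ⊆ M :=
  fun _ hz => lieCore_le M hz

lemma le_lieCore {M : LieSubalgebra F L} {J : LieIdeal F L} (h : (J : Set L) ⊆ M) :
    J ≤ lieCore F L M := le_sSup h

lemma prod_expAdP_props (p : ℕ) (hp : 0 < p)
    (hclass : LieModule.lowerCentralSeries F
        (⁅(⊤ : LieIdeal F L), (⊤ : LieIdeal F L)⁆ : LieIdeal F L)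
        (⁅(⊤ : LieIdeal F L), (⊤ : LieIdeal F L)⁆ : LieIdeal F L) (p - 1) = ⊥)
    (l : List L)
    (hl : ∀ x ∈ l, x ∈ (⁅(⊤ : LieIdeal F L), (⊤ : LieIdeal F L)⁆ : LieIdeal F L)) :
    ∃ h : Module.End F L, h * (l.map (expAdP F L p)).prod = 1 ∧
      (l.map (expAdP F L p)).prod * h = 1 ∧
      (∀ J : LieIdeal F L, presv J h) ∧
      (∀ J : LieIdeal F L, presv J (l.map (expAdP F L p)).prod) := by
  induction l with
  | nil =>
    exact ⟨1, by simp, by simp, fun J => presv_one J, fun J => by simpa using presv_one J⟩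
  | cons x l ih =>
    obtain ⟨h, hh1, hh2, hhp, hgp⟩ := ih fun y hy => hl y (List.mem_cons_of_mem x hy)
    obtain ⟨hx, hx1, hx2, hxp⟩ := expAdP_has_inv p hp x
      (ad_pow_eq_zero p hp hclass (hl x List.mem_cons_self))
    refine ⟨h * hx, ?_, ?_, fun J => presv_mul J _ _ (hhp J) (hxp J), fun J => ?_⟩
    · rw [List.map_cons, List.prod_cons, mul_assoc, ← mul_assoc hx, hx1, one_mul, hh1]
    · rw [List.map_cons, List.prod_cons, mul_assoc, ← mul_assoc _ h, hh2, one_mul, hx2]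
    · rw [List.map_cons, List.prod_cons]
      exact presv_mul J _ _ (presv_expAdP J p x) (hgp J)

lemma cores_eq_of_conj (p : ℕ) (hp : 0 < p)
    (hclass : LieModule.lowerCentralSeries F
        (⁅(⊤ : LieIdeal F L), (⊤ : LieIdeal F L)⁆ : LieIdeal F L)
        (⁅(⊤ : LieIdeal F L), (⊤ : LieIdeal F L)⁆ : LieIdeal F L) (p - 1) = ⊥)
    (M K : LieSubalgebra F L) (l : List L)
    (hl : ∀ x ∈ l, x ∈ (⁅(⊤ : LieIdeal F L), (⊤ : LieIdeal F L)⁆ : LieIdeal F L))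
    (hKM : (K : Set L) = ⇑((l.map (expAdP F L p)).prod) '' (M : Set L)) :
    lieCore F L M = lieCore F L K := by
  obtain ⟨h, hh1, hh2, hhp, hgp⟩ := prod_expAdP_props p hp hclass l hl
  set g := (l.map (expAdP F L p)).prod with hg
  have hgh : ∀ z : L, g (h z) = z := fun z => by
    have := congrFun (congrArg DFunLike.coe hh2) z
    simpa using this
  have hhg : ∀ z : L, h (g z) = z := fun z => by
    have := congrFun (congrArg DFunLike.coe hh1) z
    simpa using this
  unfold lieCore
  congr 1
  ext J
  constructor
  · intro hJ z hz
    rw [hKM]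
    exact ⟨h z, hJ (hhp J z hz), hgh z⟩
  · intro hJ z hz
    have h1 : g z ∈ (K : Set L) := hJ (hgp J z hz)
    rw [hKM] at h1
    obtain ⟨m, hm, hmz⟩ := h1
    have : m = z := by
      have := congrArg h hmz
      rwa [hhg, hhg] at this
    rwa [← this]

end CoreLemmas

section Backward
variable {F : Type*} [Field F] {L : Type*} [LieRing L] [LieAlgebra F L]

lemma exists_minimal_lieIdeal [FiniteDimensional F L] (C : LieIdeal F L) (hC : C ≠ ⊤) :
    ∃ A : LieIdeal F L, C < A ∧ ∀ J : LieIdeal F L, C < J → J ≤ A → J = A := by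
  set s : Set ℕ := {n | ∃ J : LieIdeal F L, C < J ∧ Module.finrank F J.toSubmodule = n} with hs
  have hsne : s.Nonempty := ⟨Module.finrank F (⊤ : LieIdeal F L).toSubmodule,
    ⊤, lt_top_iff_ne_top.2 hC, rfl⟩
  obtain ⟨A, hCA, hrank⟩ := Nat.sInf_mem hsne
  refine ⟨A, hCA, fun J hCJ hJA => ?_⟩
  by_contra hne
  have hlt : J.toSubmodule < A.toSubmodule := by
    refine lt_of_le_of_ne hJA fun h => hne ?_
    exact LieSubmodule.toSubmodule_injective h
  have h1 : Module.finrank F J.toSubmodule < Module.finrank F A.toSubmodule :=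
    Submodule.finrank_lt_finrank_of_lt hlt
  have h2 : sInf s ≤ Module.finrank F J.toSubmodule := Nat.sInf_le ⟨J, hCJ, rfl⟩
  rw [hrank] at h1
  omega

lemma decomp_of_coatom (M : LieSubalgebra F L) (hM : IsCoatom M) (A : LieIdeal F L)
    (hAM : ¬ ((A : Set L) ⊆ (M : Set L))) : ∀ y : L, ∃ m ∈ M, ∃ a ∈ A, y = m + a := by
  set Ssub : Submodule F L := M.toSubmodule ⊔ A.toSubmodule with hSsub
  have hlie : ∀ {x y : L}, x ∈ Ssub → y ∈ Ssub → ⁅x, y⁆ ∈ Ssub := by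
    intro x y hx hy
    obtain ⟨m, hm, a, ha, rfl⟩ := Submodule.mem_sup.1 hx
    obtain ⟨m', hm', a', ha', rfl⟩ := Submodule.mem_sup.1 hy
    have h1 : ⁅m, m'⁆ ∈ M.toSubmodule := M.lie_mem hm hm'
    have h2 : ⁅m + a, a'⁆ ∈ A.toSubmodule := A.lie_mem ha'
    have h3 : ⁅a, m'⁆ ∈ A.toSubmodule := by
      have : ⁅m', a⁆ ∈ A.toSubmodule := A.lie_mem ha
      rw [← lie_skew]
      exact Submodule.neg_mem _ this
    have : ⁅m + a, m' + a'⁆ = ⁅m, m'⁆ + (⁅a, m'⁆ + ⁅m + a, a'⁆) := by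
      rw [lie_add, add_lie]
      abel
    rw [this]
    exact Submodule.add_mem _ (Submodule.mem_sup_left h1)
      (Submodule.mem_sup_right (Submodule.add_mem _ h3 h2))
  set S : LieSubalgebra F L := { Ssub with lie_mem' := hlie } with hS
  have hMS : M ≤ S := fun z hz => Submodule.mem_sup_left hz
  have hMneS : M ≠ S := by
    intro h
    apply hAM
    intro a ha
    have : a ∈ S := Submodule.mem_sup_right ha
    rw [← h] at this
    exact this
  have hStop : S = ⊤ := hM.2 S (lt_of_le_of_ne hMS hMneS)
  intro y
  have : y ∈ S := by rw [hStop]; trivial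
  obtain ⟨m, hm, a, ha, rfl⟩ := Submodule.mem_sup.1 this
  exact ⟨m, hm, a, ha, rfl⟩

lemma expAdP_apply_eq (p : ℕ) (hp2 : 2 ≤ p) (n m : L) (C : LieIdeal F L)
    (h2 : ((ad F L n)^2) m ∈ C) :
    ∃ r ∈ C, expAdP F L p n m = m + ⁅n, m⁆ + r := by
  have hpow : ∀ j : ℕ, ((ad F L n)^(j+2)) m ∈ C := by
    intro j
    induction j with
    | zero => exact h2
    | succ j ih =>
      have : (ad F L n)^(j+1+2) = ad F L n * (ad F L n)^(j+2) := (pow_succ' _ _)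
      rw [this]
      exact C.lie_mem ih
  obtain ⟨q, rfl⟩ : ∃ q, p = q + 2 := ⟨p - 2, by omega⟩
  have happ : expAdP F L (q+2) n m
      = ∑ r ∈ Finset.range (q+2), (((r.factorial : F)⁻¹) • ((ad F L n)^r) m) := by
    unfold expAdP
    rw [LinearMap.sum_apply]
    exact Finset.sum_congr rfl fun r _ => rfl
  rw [happ, Finset.sum_range_succ', Finset.sum_range_succ']
  refine ⟨∑ r ∈ Finset.range q, (((r+1+1).factorial : F)⁻¹) • ((ad F L n)^(r+1+1)) m, ?_, ?_⟩
  · exact Submodule.sum_mem _ fun r _ => Submodule.smul_mem _ _ (hpow r)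
  · have h1 : ((0+1).factorial : F)⁻¹ • ((ad F L n)^(0+1)) m = ⁅n, m⁆ := by
      simp [LieAlgebra.ad_apply]
    have h0 : ((Nat.factorial 0 : F))⁻¹ • ((ad F L n)^0) m = m := by simp
    rw [h1, h0]
    abel

lemma conj_of_cores_eq [FiniteDimensional F L]
    (p : ℕ) (hp : p.Prime)
    (hclass : LieModule.lowerCentralSeries F
        (⁅(⊤ : LieIdeal F L), (⊤ : LieIdeal F L)⁆ : LieIdeal F L)
        (⁅(⊤ : LieIdeal F L), (⊤ : LieIdeal F L)⁆ : LieIdeal F L) (p - 1) = ⊥)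
    (M K : LieSubalgebra F L) (hM : IsCoatom M) (hK : IsCoatom K)
    (hcore : lieCore F L M = lieCore F L K) :
    ∃ l : List L, (∀ x ∈ l, x ∈ (⁅(⊤ : LieIdeal F L), (⊤ : LieIdeal F L)⁆ : LieIdeal F L)) ∧
        (K : Set L) = ⇑((l.map (expAdP F L p)).prod) '' (M : Set L) := by
  have hp0 : 0 < p := hp.pos
  have hMKempty : M = K → ∃ l : List L,
      (∀ x ∈ l, x ∈ (⁅(⊤ : LieIdeal F L), (⊤ : LieIdeal F L)⁆ : LieIdeal F L)) ∧
      (K : Set L) = ⇑((l.map (expAdP F L p)).prod) '' (M : Set L) := by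
    rintro rfl
    exact ⟨[], by simp, by simp⟩
  by_cases hMK : M = K
  · exact hMKempty hMK
  set C := lieCore F L M with hC
  have hCK : lieCore F L K = C := hcore.symm
  have hCM : (C : Set L) ⊆ (M : Set L) := lieCore_subset M
  have hCKs : (C : Set L) ⊆ (K : Set L) := by rw [← hCK] at *; exact lieCore_subset K
  have hCtop : C ≠ ⊤ := by
    intro h
    apply hM.1
    ext z
    simp only [LieSubalgebra.mem_top, iff_true]
    exact hCM (by rw [h]; trivial)
  obtain ⟨A, hCA, hmin⟩ := exists_minimal_lieIdeal C hCtop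
  have hCAle : C ≤ A := hCA.le
  -- the derived ideal
  set N : LieIdeal F L := ⁅(⊤ : LieIdeal F L), (⊤ : LieIdeal F L)⁆ with hN
  -- Step 1 : ⁅L², A⁆ ≤ C
  have hNA : (⁅N, A⁆ : LieIdeal F L) ≤ C := by
    by_cases hlt : C < (⁅N, A⁆ : LieIdeal F L) ⊔ C
    · exfalso
      have hle : (⁅N, A⁆ : LieIdeal F L) ⊔ C ≤ A := sup_le (LieSubmodule.lie_le_right _ _) hCAle
      have heq := hmin _ hlt hle
      exact hCA.not_ge (le_of_le_lie_sup p hp0 hclass A C heq.ge)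
    · have : (⁅N, A⁆ : LieIdeal F L) ⊔ C ≤ C := by
        rcases (le_sup_right : C ≤ (⁅N, A⁆ : LieIdeal F L) ⊔ C).lt_or_eq with h | h
        · exact absurd h hlt
        · exact h.ge
      exact le_trans le_sup_left this
  -- Step 2 : A is not contained in M or K
  have hAMne : ¬ ((A : Set L) ⊆ (M : Set L)) := fun h => hCA.not_ge (le_lieCore h)
  have hAKne : ¬ ((A : Set L) ⊆ (K : Set L)) := fun h => by
    have := le_lieCore (M := K) h
    rw [hCK] at this
    exact hCA.not_ge this
  have hdecM := decomp_of_coatom M hM A hAMne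
  have hdecK := decomp_of_coatom K hK A hAKne
  -- Step 3 : ⁅A, A⁆ ≤ C
  have hAA : (⁅A, A⁆ : LieIdeal F L) ≤ C := by
    by_cases hlt : C < (⁅A, A⁆ : LieIdeal F L) ⊔ C
    · exfalso
      have heq := hmin _ hlt (sup_le (LieSubmodule.lie_le_right _ _) hCAle)
      have hAN' : A ≤ N ⊔ C := by
        conv_lhs => rw [← heq]
        refine sup_le (le_trans ?_ le_sup_left) le_sup_right
        exact le_trans (LieSubmodule.mono_lie le_top le_top) (le_refl N)
      have h2 : (⁅A, A⁆ : LieIdeal F L) ≤ ⁅N, A⁆ ⊔ C := by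
        refine le_trans (LieSubmodule.mono_lie hAN' (le_refl _)) ?_
        rw [LieSubmodule.sup_lie]
        exact sup_le le_sup_left (le_trans (LieSubmodule.lie_le_left _ _) le_sup_right)
      have h3 : A ≤ C := by
        have : A ≤ ⁅N, A⁆ ⊔ C := by
          conv_lhs => rw [← heq]
          exact sup_le (le_trans h2 (sup_le le_sup_left le_sup_right)) le_sup_right
        exact le_trans this (sup_le hNA (le_refl C))
      exact hCA.not_ge h3
    · have : (⁅A, A⁆ : LieIdeal F L) ⊔ C ≤ C := by
        rcases (le_sup_right : C ≤ (⁅A, A⁆ : LieIdeal F L) ⊔ C).lt_or_eq with h | h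
        · exact absurd h hlt
        · exact h.ge
      exact le_trans le_sup_left this
  -- convenient membership helpers
  have hlieL : ∀ (J : LieIdeal F L) {c : L}, c ∈ J → ∀ y : L, ⁅c, y⁆ ∈ J := by
    intro J c hc y
    rw [← lie_skew]
    exact neg_mem (J.lie_mem hc)
  have hAAmem : ∀ {a : L}, a ∈ A → ∀ {a' : L}, a' ∈ A → ⁅a, a'⁆ ∈ C :=
    fun {a} ha {a'} ha' => hAA (LieSubmodule.lie_mem_lie ha ha')
  have hNAmem : ∀ {n : L}, n ∈ N → ∀ {a : L}, a ∈ A → ⁅n, a⁆ ∈ C :=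
    fun {n} hn {a} ha => hNA (LieSubmodule.lie_mem_lie hn ha)
  -- Step 4 : ⁅M, M⁆ ⊆ C
  have hMM : ∀ {m : L}, m ∈ M → ∀ {m' : L}, m' ∈ M → ⁅m, m'⁆ ∈ C := by
    set Dsub : Submodule F L :=
      { carrier := {x : L | ∀ a ∈ A, ⁅x, a⁆ ∈ C},
        zero_mem' := fun a _ => by rw [zero_lie]; exact zero_mem _,
        add_mem' := fun hx hy a ha => by
          rw [add_lie]; exact add_mem (hx a ha) (hy a ha),
        smul_mem' := fun c x hx a ha => by
          rw [smul_lie]; exact Submodule.smul_mem _ _ (hx a ha) } with hDsub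
    have hCD : ∀ {c : L}, c ∈ C → c ∈ Dsub := fun hc a _ => hlieL C hc a
    set DM : LieIdeal F L :=
      { (Dsub ⊓ M.toSubmodule : Submodule F L) with
        lie_mem := by
          rintro x z ⟨hzD, hzM⟩
          obtain ⟨m, hm, a, ha, rfl⟩ := hdecM x
          have h1 : ⁅m, z⁆ ∈ Dsub := by
            intro a' ha'
            have heq : ⁅m, ⁅z, a'⁆⁆ - ⁅z, ⁅m, a'⁆⁆ = ⁅⁅m, z⁆, a'⁆ := (lie_lie m z a').symm
            rw [← heq]
            exact sub_mem (C.lie_mem (hzD a' ha')) (hzD _ (A.lie_mem ha'))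
          have h2 : ⁅m, z⁆ ∈ M.toSubmodule := M.lie_mem hm hzM
          have h3 : ⁅a, z⁆ ∈ C := by
            have : ⁅z, a⁆ ∈ C := hzD a ha
            rw [← lie_skew]
            exact neg_mem this
          have : ⁅m + a, z⁆ = ⁅m, z⁆ + ⁅a, z⁆ := add_lie m a z
          rw [this]
          exact add_mem (Submodule.mem_inf.mpr ⟨h1, h2⟩)
            (Submodule.mem_inf.mpr ⟨hCD h3, hCM h3⟩) } with hDM
    have hDMC : DM ≤ C := le_lieCore (fun z hz => hz.2)
    intro m hm m' hm'
    have h1 : ⁅m, m'⁆ ∈ N := LieSubmodule.lie_mem_lie trivial trivial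
    have h2 : ⁅m, m'⁆ ∈ Dsub := fun a ha => hNAmem h1 ha
    exact hDMC (Submodule.mem_inf.mpr ⟨h2, M.lie_mem hm hm'⟩)
  -- Step 5 : S ∩ A ⊆ C for S = M, K
  have hIntC : ∀ (S : LieSubalgebra F L), (∀ y : L, ∃ m ∈ S, ∃ a ∈ A, y = m + a) →
      ((C : Set L) ⊆ (S : Set L)) → lieCore F L S = C →
      ∀ {z : L}, z ∈ S → z ∈ A → z ∈ C := by
    intro S hdec hCS hcoreS
    set SA : LieIdeal F L :=
      { (S.toSubmodule ⊓ A.toSubmodule : Submodule F L) with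
        lie_mem := by
          rintro x z ⟨hzS, hzA⟩
          obtain ⟨m, hm, a, ha, rfl⟩ := hdec x
          have h1 : ⁅m, z⁆ ∈ S.toSubmodule ⊓ A.toSubmodule :=
            Submodule.mem_inf.mpr ⟨S.lie_mem hm hzS, A.lie_mem hzA⟩
          have h2 : ⁅a, z⁆ ∈ C := hAAmem ha hzA
          have h3 : ⁅a, z⁆ ∈ S.toSubmodule ⊓ A.toSubmodule :=
            Submodule.mem_inf.mpr ⟨hCS h2, hCAle h2⟩
          have : ⁅m + a, z⁆ = ⁅m, z⁆ + ⁅a, z⁆ := add_lie m a z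
          rw [this]
          exact add_mem h1 h3 } with hSA
    have hle : SA ≤ lieCore F L S := le_lieCore (fun z hz => hz.1)
    rw [hcoreS] at hle
    intro z hzS hzA
    exact hle (Submodule.mem_inf.mpr ⟨hzS, hzA⟩)
  have hMAC : ∀ {z : L}, z ∈ M → z ∈ A → z ∈ C := hIntC M hdecM hCM hC.symm
  have hKAC : ∀ {z : L}, z ∈ K → z ∈ A → z ∈ C := hIntC K hdecK hCKs hCK
  -- Step 6 : the action of M on A/C is nontrivial (else M = K)
  have hmain : ∃ m₀, m₀ ∈ M ∧ ∃ b, b ∈ A ∧ ⁅m₀, b⁆ ∉ C := by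
    by_contra hcon
    push_neg at hcon
    have htriv : ∀ m ∈ M, ∀ a ∈ A, ⁅m, a⁆ ∈ C := hcon
    set Mid : LieIdeal F L :=
      { (M.toSubmodule : Submodule F L) with
        lie_mem := by
          intro x z hz
          obtain ⟨m, hm, a, ha, rfl⟩ := hdecM x
          have h1 : ⁅m, z⁆ ∈ M.toSubmodule := M.lie_mem hm hz
          have h2 : ⁅a, z⁆ ∈ C := by
            rw [← lie_skew]
            exact neg_mem (htriv z hz a ha)
          have : ⁅m + a, z⁆ = ⁅m, z⁆ + ⁅a, z⁆ := add_lie m a z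
          rw [this]
          exact add_mem h1 (hCM h2) } with hMid
    have hle : Mid ≤ C := le_lieCore (fun z hz => hz)
    have hMK' : M ≤ K := fun z hz => hCKs (hle hz)
    rcases lt_or_eq_of_le hMK' with h | h
    · exact hK.1 (hM.2 K h)
    · exact hMK h
  obtain ⟨m₀, hm₀, b₀, hb₀A, hb₀C⟩ := hmain
  -- Step 7 : "injectivity" of ad m₀ on A/C
  have hWC : ∀ x, x ∈ A → ⁅m₀, x⁆ ∈ C → x ∈ C := by
    set W : LieIdeal F L :=
      { carrier := {x : L | x ∈ A ∧ ⁅m₀, x⁆ ∈ C},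
        zero_mem' := ⟨zero_mem _, by rw [lie_zero]; exact zero_mem _⟩,
        add_mem' := fun hx hy => ⟨add_mem hx.1 hy.1, by
          rw [lie_add]; exact add_mem hx.2 hy.2⟩,
        smul_mem' := fun c x hx => ⟨Submodule.smul_mem _ _ hx.1, by
          rw [lie_smul]; exact Submodule.smul_mem _ _ hx.2⟩,
        lie_mem := by
          rintro x z ⟨hzA, hzC⟩
          obtain ⟨m, hm, a, ha, rfl⟩ := hdecM x
          have h1 : ⁅m, z⁆ ∈ A ∧ ⁅m₀, ⁅m, z⁆⁆ ∈ C := by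
            refine ⟨A.lie_mem hzA, ?_⟩
            rw [leibniz_lie m₀ m z]
            exact add_mem (hlieL C (hMM hm₀ hm) z) (C.lie_mem hzC)
          have h2 : ⁅a, z⁆ ∈ A ∧ ⁅m₀, ⁅a, z⁆⁆ ∈ C := by
            have hc : ⁅a, z⁆ ∈ C := hAAmem ha hzA
            exact ⟨hCAle hc, C.lie_mem hc⟩
          have : ⁅m + a, z⁆ = ⁅m, z⁆ + ⁅a, z⁆ := add_lie m a z
          rw [Set.mem_setOf_eq, this]
          exact ⟨add_mem h1.1 h2.1, by rw [lie_add]; exact add_mem h1.2 h2.2⟩ } with hW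
    have hCW : C ≤ W := fun c hc => ⟨hCAle hc, C.lie_mem hc⟩
    have hWA : W ≤ A := fun z hz => hz.1
    by_cases hlt : C < W
    · exfalso
      have := hmin W hlt hWA
      apply hb₀C
      have : b₀ ∈ W := by rw [this]; exact hb₀A
      exact this.2
    · intro x hxA hxC
      have hWC' : W ≤ C := by
        rcases hCW.lt_or_eq with h | h
        · exact absurd h hlt
        · exact h.ge
      exact hWC' (⟨hxA, hxC⟩ : x ∈ W)
  -- Step 8 : "surjectivity" of ad m₀ on A/C
  have hU : ∀ t, t ∈ A → ∃ a ∈ A, ∃ c ∈ C, t = ⁅m₀, a⁆ + c := by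
    set U : LieIdeal F L :=
      { (Submodule.map (ad F L m₀) A.toSubmodule ⊔ C.toSubmodule : Submodule F L) with
        lie_mem := by
          intro x z hz
          obtain ⟨u, hu, c, hc, rfl⟩ := Submodule.mem_sup.1 hz
          obtain ⟨a, ha, rfl⟩ := hu
          have hxc : ⁅x, c⁆ ∈ C := C.lie_mem hc
          obtain ⟨m, hm, a', ha', rfl⟩ := hdecM x
          have hadm : (ad F L m₀) a = ⁅m₀, a⁆ := rfl
          have h1 : ⁅m, ⁅m₀, a⁆⁆ ∈ Submodule.map (ad F L m₀) A.toSubmodule ⊔ C.toSubmodule := by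
            rw [leibniz_lie m m₀ a]
            refine add_mem (Submodule.mem_sup_right (hlieL C (hMM hm hm₀) a)) ?_
            exact Submodule.mem_sup_left ⟨⁅m, a⁆, A.lie_mem ha, rfl⟩
          have h2 : ⁅a', ⁅m₀, a⁆⁆ ∈ C := hAAmem ha' (A.lie_mem ha)
          have : ⁅m + a', (ad F L m₀) a + c⁆
              = ⁅m, ⁅m₀, a⁆⁆ + ⁅a', ⁅m₀, a⁆⁆ + ⁅m + a', c⁆ := by
            rw [hadm, lie_add, add_lie]
          rw [this]
          exact add_mem (add_mem h1 (Submodule.mem_sup_right h2))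
            (Submodule.mem_sup_right (C.lie_mem hc)) } with hUdef
    have hUA : U ≤ A := by
      intro z hz
      obtain ⟨u, hu, c, hc, rfl⟩ := Submodule.mem_sup.1 hz
      obtain ⟨a, ha, rfl⟩ := hu
      exact add_mem (A.lie_mem ha) (hCAle hc)
    have hCU : C ≤ U := fun c hc => Submodule.mem_sup_right hc
    have hCneU : C ≠ U := by
      intro h
      apply hb₀C
      have : ⁅m₀, b₀⁆ ∈ U := Submodule.mem_sup_left ⟨b₀, hb₀A, rfl⟩
      rw [← h] at this
      exact this
    have hUeq : U = A := hmin U (lt_of_le_of_ne hCU hCneU) hUA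
    intro t ht
    have : t ∈ U := by rw [hUeq]; exact ht
    obtain ⟨u, hu, c, hc, rfl⟩ := Submodule.mem_sup.1 this
    obtain ⟨a, ha, rfl⟩ := hu
    exact ⟨a, ha, c, hc, rfl⟩
  -- Step 9 : the 1-cocycle m ↦ g m  (m + g m ∈ K)
  have hgex : ∀ m, m ∈ M → ∃ a, a ∈ A ∧ m + a ∈ K := by
    intro m hm
    obtain ⟨k, hk, a, ha, heq⟩ := hdecK m
    refine ⟨-a, neg_mem ha, ?_⟩
    have : m + -a = k := by rw [heq]; abel
    rw [this]
    exact hk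
  choose g hgA hgK using hgex
  have c1 : ∀ m (hm : m ∈ M), ∀ m' (hm' : m' ∈ M),
      ⁅m, g m' hm'⁆ - ⁅m', g m hm⁆ ∈ C := by
    intro m hm m' hm'
    have hfull : ⁅m + g m hm, m' + g m' hm'⁆ ∈ K :=
      K.lie_mem (hgK m hm) (hgK m' hm')
    have heq : ⁅m, g m' hm'⁆ - ⁅m', g m hm⁆
        = ⁅m + g m hm, m' + g m' hm'⁆ - ⁅m, m'⁆ - ⁅g m hm, g m' hm'⁆ := by
      rw [lie_add, add_lie, add_lie, ← lie_skew m' (g m hm)]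
      abel
    have hinK : ⁅m, g m' hm'⁆ - ⁅m', g m hm⁆ ∈ K := by
      rw [heq]
      exact sub_mem (sub_mem hfull (hCKs (hMM hm hm'))) (hCKs (hAAmem (hgA m hm) (hgA m' hm')))
    have hinA : ⁅m, g m' hm'⁆ - ⁅m', g m hm⁆ ∈ A :=
      sub_mem (A.lie_mem (hgA m' hm')) (A.lie_mem (hgA m hm))
    exact hKAC hinK hinA
  -- Step 10 : find the conjugating element a
  obtain ⟨a, haA, ctil, hctil, haeq⟩ := hU (-(g m₀ hm₀)) (neg_mem (hgA m₀ hm₀))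
  have hmc : ⁅m₀, a⁆ + g m₀ hm₀ ∈ C := by
    have hgval : g m₀ hm₀ = -(⁅m₀, a⁆ + ctil) := neg_eq_iff_eq_neg.1 haeq
    have : ⁅m₀, a⁆ + g m₀ hm₀ = -ctil := by rw [hgval]; abel
    rw [this]
    exact neg_mem hctil
  have hclaim : ∀ m (hm : m ∈ M), g m hm + ⁅m, a⁆ ∈ C := by
    intro m hm
    have h'A : g m hm + ⁅m, a⁆ ∈ A := add_mem (hgA m hm) (A.lie_mem haA)
    refine hWC _ h'A ?_
    have heq : ⁅m₀, g m hm + ⁅m, a⁆⁆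
        = (⁅m₀, g m hm⁆ - ⁅m, g m₀ hm₀⁆) + ⁅⁅m₀, m⁆, a⁆
          + ⁅m, ⁅m₀, a⁆ + g m₀ hm₀⁆ := by
      rw [lie_add, leibniz_lie m₀ m a, lie_add]
      abel
    rw [heq]
    exact add_mem (add_mem (c1 m₀ hm₀ m hm) (hlieL C (hMM hm₀ hm) a)) (C.lie_mem hmc)
  -- Step 11 : A ≤ N ⊔ C and a decomposes as n + c₀ with n ∈ A ⊓ N
  have hAN : A ≤ N ⊔ C := by
    have hCle : C ≤ A ⊓ (N ⊔ C) := le_inf hCAle (le_trans le_sup_right (le_refl _))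
    by_cases hlt : C < A ⊓ (N ⊔ C)
    · have := hmin _ hlt inf_le_left
      exact inf_eq_left.1 this
    · exfalso
      have hle : A ⊓ (N ⊔ C) ≤ C := by
        rcases hCle.lt_or_eq with h | h
        · exact absurd h hlt
        · exact h.ge
      apply hb₀C
      refine hle (Submodule.mem_inf.mpr ⟨A.lie_mem hb₀A, ?_⟩)
      have : ⁅m₀, b₀⁆ ∈ N := LieSubmodule.lie_mem_lie trivial trivial
      exact (le_sup_left : N ≤ N ⊔ C) this
  obtain ⟨n, hnN, c₀, hc₀, hnceq⟩ := (LieSubmodule.mem_sup _ _ _).1 (hAN haA)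
  have hnA : n ∈ A := by
    have : n = a - c₀ := by rw [← hnceq]; abel
    rw [this]
    exact sub_mem haA (hCAle hc₀)
  -- Step 12 : assembling : K = expAdP n '' M
  have hadn : (ad F L n)^p = 0 := ad_pow_eq_zero p hp0 hclass hnN
  obtain ⟨hinv, hinv1, hinv2, hinvp⟩ := expAdP_has_inv p hp0 n hadn
  have hEm : ∀ m (hm : m ∈ M), ∃ c₆ ∈ C, expAdP F L p n m = (m + g m hm) + c₆ := by
    intro m hm
    have h2m : ((ad F L n)^2) m ∈ C := by
      have h2eq : ((ad F L n)^2) m = ⁅n, ⁅n, m⁆⁆ := by rw [pow_two]; rfl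
      rw [h2eq]
      exact hAAmem hnA (hlieL A hnA m)
    obtain ⟨r, hrC, hre⟩ := expAdP_apply_eq p hp.two_le n m C h2m
    set c₅ := g m hm + ⁅m, a⁆ with hc₅
    have hc₅C : c₅ ∈ C := hclaim m hm
    refine ⟨r - ⁅c₀, m⁆ - c₅, sub_mem (sub_mem hrC (hlieL C hc₀ m)) hc₅C, ?_⟩
    rw [hre]
    have hgm : g m hm = ⁅n, m⁆ + ⁅c₀, m⁆ + c₅ := by
      have h1 : ⁅a, m⁆ = ⁅n, m⁆ + ⁅c₀, m⁆ := by rw [← hnceq, add_lie]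
      have h2 : g m hm = -⁅m, a⁆ + c₅ := by rw [hc₅]; abel
      rw [h2, ← lie_skew m a, h1]
      abel
    rw [hgm]
    abel
  have hea : ∀ z, expAdP F L p n (hinv z) = z := by
    intro z
    have := congrFun (congrArg DFunLike.coe hinv2) z
    simpa using this
  refine ⟨[n], ?_, ?_⟩
  · intro x hx
    rw [List.mem_singleton] at hx
    subst hx
    exact hnN
  · have hprod : ((List.map (expAdP F L p) [n]).prod) = expAdP F L p n := by simp
    rw [hprod]
    apply Set.Subset.antisymm
    · intro k hk
      obtain ⟨m, hm, t, htA, hkeq⟩ := hdecM k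
      have hc₇ : t - g m hm ∈ C := by
        refine hKAC ?_ (sub_mem htA (hgA m hm))
        have : t - g m hm = k - (m + g m hm) := by rw [hkeq]; abel
        rw [this]
        exact sub_mem hk (hgK m hm)
      obtain ⟨c₆, hc₆, he⟩ := hEm m hm
      have hkeq2 : k = expAdP F L p n m + ((t - g m hm) - c₆) := by
        rw [he, hkeq]
        abel
      set c₈ := (t - g m hm) - c₆ with hc₈def
      have hc₈ : c₈ ∈ C := sub_mem hc₇ hc₆
      refine ⟨m + hinv c₈, ?_, ?_⟩
      · exact M.add_mem hm (hCM (hinvp C c₈ hc₈))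
      · rw [map_add, hea c₈]
        exact hkeq2.symm
    · rintro _ ⟨m, hm, rfl⟩
      obtain ⟨c₆, hc₆, he⟩ := hEm m hm
      rw [he]
      exact K.add_mem (hgK m hm) (hCKs hc₆)

end Backward

/-- Over a field of characteristic `p > 0`, if the derived algebra `L² = ⁅L,L⁆` of the
finite-dimensional solvable Lie algebra `L` is nilpotent of class `< p`, then two maximal
subalgebras `M`, `K` of `L` are conjugate in `L` (under the inner automorphisms
`exp (ad x)`, `x ∈ L²`) if and only if their cores coincide. -/
theorem maximal_subalgebras_conjugate_iff_cores_eq_charP (F : Type*) [Field F]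
    (L : Type*) [LieRing L] [LieAlgebra F L] [FiniteDimensional F L]
    [LieAlgebra.IsSolvable L]
    (p : ℕ) [CharP F p] (hp : p.Prime)
    (hclass : LieModule.lowerCentralSeries F
        (⁅(⊤ : LieIdeal F L), (⊤ : LieIdeal F L)⁆ : LieIdeal F L)
        (⁅(⊤ : LieIdeal F L), (⊤ : LieIdeal F L)⁆ : LieIdeal F L) (p - 1) = ⊥)
    (M K : LieSubalgebra F L) (hM : IsCoatom M) (hK : IsCoatom K) :
    (∃ l : List L, (∀ x ∈ l, x ∈ (⁅(⊤ : LieIdeal F L), (⊤ : LieIdeal F L)⁆ : LieIdeal F L)) ∧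
        (K : Set L) = ⇑((l.map (expAdP F L p)).prod) '' (M : Set L))
      ↔ lieCore F L M = lieCore F L K := by
  constructor
  · rintro ⟨l, hl, hKM⟩
    exact cores_eq_of_conj p hp.pos hclass M K l hl hKM
  · intro hcore
    exact conj_of_cores_eq p hp hclass M K hM hK hcore
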